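/- For bounded operators T: X → Y between Banach spaces, SCS_{ℓ₁}(T) ≤ SS_{c₀}(T*), where SCS_{ℓ₁}(T) = sup{δ(ST)/‖S‖ : S: Y → ℓ₁ bounded with ST surjective} and SS_{c₀}(T*) = sup{(‖V‖·‖(T*V)^{-1}‖)^{-1} : V: c₀ → Y* bounded with T*V an isomorphism onto its range}. -/

import Mathlib

open NormedSpace Metric Set Filter
open scoped ENNReal

noncomputable section

/-- Hausdorff measure of noncompactness of a set. -/
def hchi {Y : Type*} [SeminormedAddCommGroup Y] (A : Set Y) : ℝ :=
  sInf { r : ℝ | ∃ F : Finset Y, ∀ a ∈ A, ∃ y ∈ F, dist a y ≤ r }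

variable {X Y Z : Type*} [NormedAddCommGroup X] [NormedSpace ℝ X]
  [NormedAddCommGroup Y] [NormedSpace ℝ Y]

/-- χ(T) = Hausdorff measure of noncompactness of T(B_X). -/
def chiOp (T : X →L[ℝ] Y) : ℝ := hchi (T '' closedBall 0 1)

/-- SS(T): the quantity measuring strict singularity. -/
def SS (T : X →L[ℝ] Y) : ℝ :=
  sSup { c : ℝ | ∃ M : Submodule ℝ X, IsClosed (M : Set X) ∧ ¬ FiniteDimensional ℝ M ∧
      c = sInf { r : ℝ | ∃ x ∈ M, ‖x‖ = 1 ∧ r = ‖T x‖ } }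

/-- SS_Z(T): the quantity measuring Z-strict singularity. -/
def SSZ (Z : Type*) [NormedAddCommGroup Z] [NormedSpace ℝ Z] (T : X →L[ℝ] Y) : ℝ :=
  sSup { r : ℝ | ∃ R : Z →L[ℝ] X, ∃ c : ℝ, 0 < c ∧ (∀ z, c * ‖z‖ ≤ ‖T (R z)‖) ∧ r = c / ‖R‖ }

/-- The adjoint (dual) operator T* : Y* → X*. -/
def adjOp (T : X →L[ℝ] Y) : StrongDual ℝ Y →L[ℝ] StrongDual ℝ X :=
  (ContinuousLinearMap.compL ℝ X Y ℝ).flip T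

/-- δ(S) for a (surjective) map S: the supremum of δ > 0 with δ·B ⊆ S(B). -/
def deltaQ {W : Type*} [SeminormedAddCommGroup W] (S : X → W) : ℝ :=
  sSup { d : ℝ | 0 < d ∧ ∀ w : W, ‖w‖ ≤ d → ∃ x : X, ‖x‖ ≤ 1 ∧ S x = w }

/-- SCS(T): the quantity measuring strict cosingularity. -/
def SCS (T : X →L[ℝ] Y) : ℝ :=
  sSup { r : ℝ | ∃ N : Submodule ℝ Y, IsClosed (N : Set Y) ∧ ¬ FiniteDimensional ℝ (Y ⧸ N) ∧
      Function.Surjective (fun x : X => (Submodule.Quotient.mk (T x) : Y ⧸ N)) ∧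
      r = deltaQ (fun x : X => (Submodule.Quotient.mk (T x) : Y ⧸ N)) }

/-- SCS_Z(T): the quantity measuring Z-strict cosingularity. -/
def SCSZ (Z : Type*) [NormedAddCommGroup Z] [NormedSpace ℝ Z] (T : X →L[ℝ] Y) : ℝ :=
  sSup { r : ℝ | ∃ S : Y →L[ℝ] Z, Function.Surjective (fun x : X => S (T x)) ∧
      r = deltaQ (fun x : X => S (T x)) / ‖S‖ }

/-- The annihilator M^⊥ in the continuous dual. -/
def annih (M : Submodule ℝ X) : Submodule ℝ (StrongDual ℝ X) where
  carrier := { f | ∀ x ∈ M, f x = 0 }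
  add_mem' := by intro f g hf hg x hx; simp [hf x hx, hg x hx]
  zero_mem' := by intro x _; simp
  smul_mem' := by intro c f hf x hx; simp [hf x hx]

/-- The quantity wk_Z(A) measuring weak non-compactness. -/
def wkk (Z : Type*) [NormedAddCommGroup Z] [NormedSpace ℝ Z] (A : Set Z) : ℝ :=
  sSup { r : ℝ | ∃ φ : StrongDual ℝ (StrongDual ℝ Z),
      StrongDual.toWeakDual φ ∈ closure (StrongDual.toWeakDual '' (inclusionInDoubleDual ℝ Z '' A)) ∧
      r = Metric.infDist φ (Set.range (inclusionInDoubleDual ℝ Z)) }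

/-- A Banach space is λ-subprojective. -/
def Subprojective (lam : ℝ) (Y : Type*) [NormedAddCommGroup Y] [NormedSpace ℝ Y] : Prop :=
  ∀ M : Submodule ℝ Y, IsClosed (M : Set Y) → ¬ FiniteDimensional ℝ M →
    ∃ N : Submodule ℝ Y, N ≤ M ∧ IsClosed (N : Set Y) ∧ ¬ FiniteDimensional ℝ N ∧
      ∃ P : Y →L[ℝ] Y, ‖P‖ ≤ lam ∧ LinearMap.range (P : Y →ₗ[ℝ] Y) = N ∧ ∀ y, P (P y) = P y

/-- A Banach space is λ-superprojective. -/
def Superprojective (lam : ℝ) (Y : Type*) [NormedAddCommGroup Y] [NormedSpace ℝ Y] : Prop :=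
  ∀ M : Submodule ℝ Y, IsClosed (M : Set Y) → ¬ FiniteDimensional ℝ (Y ⧸ M) →
    ∃ N : Submodule ℝ Y, M ≤ N ∧ IsClosed (N : Set Y) ∧ ¬ FiniteDimensional ℝ (Y ⧸ N) ∧
      ∃ P : Y →L[ℝ] Y, ‖P‖ ≤ lam ∧ LinearMap.range (P : Y →ₗ[ℝ] Y) = N ∧ ∀ y, P (P y) = P y

end

instance : Fact ((1:ℝ≥0∞) ≤ 1) := ⟨le_rfl⟩



noncomputable section
lemma c0_norm_apply_le (z : ZeroAtInftyContinuousMap ℕ ℝ) (n : ℕ) : ‖z n‖ ≤ ‖z‖ := by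
  rw [← ZeroAtInftyContinuousMap.norm_toBCF_eq_norm]
  exact z.toBCF.norm_coe_le_norm n

lemma c0_norm_le (z : ZeroAtInftyContinuousMap ℕ ℝ) {C : ℝ} (hC : 0 ≤ C)
    (h : ∀ n, ‖z n‖ ≤ C) : ‖z‖ ≤ C := by
  rw [← ZeroAtInftyContinuousMap.norm_toBCF_eq_norm]
  exact (BoundedContinuousFunction.norm_le hC).mpr h

lemma l1_summable_norm (w : lp (fun _ : ℕ => ℝ) 1) : Summable (fun n => ‖w n‖) := by
  have := (lp.memℓp w).summable (p := 1) (by norm_num)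
  simpa using this

lemma l1_norm_eq (w : lp (fun _ : ℕ => ℝ) 1) : ‖w‖ = ∑' n, ‖w n‖ := by
  have := lp.norm_eq_tsum_rpow (p := 1) (by norm_num) w
  simpa using this

lemma pair_summable (z : ZeroAtInftyContinuousMap ℕ ℝ) (w : lp (fun _ : ℕ => ℝ) 1) :
    Summable (fun n => w n * z n) := by
  refine Summable.of_norm_bounded ((l1_summable_norm w).mul_right ‖z‖) ?_
  intro n
  rw [norm_mul]
  exact mul_le_mul_of_nonneg_left (c0_norm_apply_le z n) (norm_nonneg _)

/-- Pairing of c₀ with ℓ₁ as a functional. -/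
def pairFn (z : ZeroAtInftyContinuousMap ℕ ℝ) : StrongDual ℝ (lp (fun _ : ℕ => ℝ) 1) :=
  LinearMap.mkContinuous
    { toFun := fun w => ∑' n, w n * z n
      map_add' := by
        intro w v
        have : ∀ n, ((w + v : lp (fun _ : ℕ => ℝ) 1) n) * z n = w n * z n + v n * z n := by
          intro n; rw [lp.coeFn_add]; simp [add_mul]
        show (∑' n, ((w + v : lp (fun _ : ℕ => ℝ) 1) n) * z n) = _
        rw [tsum_congr this]
        exact Summable.tsum_add (pair_summable z w) (pair_summable z v)
      map_smul' := by
        intro c w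
        have : ∀ n, ((c • w : lp (fun _ : ℕ => ℝ) 1) n) * z n = c * (w n * z n) := by
          intro n; rw [lp.coeFn_smul]; simp [mul_assoc]
        show (∑' n, ((c • w : lp (fun _ : ℕ => ℝ) 1) n) * z n) = _
        rw [tsum_congr this, tsum_mul_left]
        rfl }
    ‖z‖
    (by
      intro w
      simp only [LinearMap.coe_mk, AddHom.coe_mk]
      calc ‖∑' n, w n * z n‖ ≤ ∑' n, ‖w n * z n‖ :=
            norm_tsum_le_tsum_norm ((pair_summable z w).abs)
        _ ≤ ∑' n, ‖w n‖ * ‖z‖ := by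
            refine Summable.tsum_le_tsum (fun n => ?_) ((pair_summable z w).abs)
              ((l1_summable_norm w).mul_right _)
            rw [norm_mul]
            exact mul_le_mul_of_nonneg_left (c0_norm_apply_le z n) (norm_nonneg _)
        _ = ‖z‖ * ‖w‖ := by rw [tsum_mul_right, l1_norm_eq, mul_comm])

lemma pairFn_apply (z : ZeroAtInftyContinuousMap ℕ ℝ) (w : lp (fun _ : ℕ => ℝ) 1) :
    pairFn z w = ∑' n, w n * z n := rfl

lemma pairFn_norm_le (z : ZeroAtInftyContinuousMap ℕ ℝ) : ‖pairFn z‖ ≤ ‖z‖ :=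
  LinearMap.mkContinuous_norm_le _ (norm_nonneg z) _


/-- The pairing c₀ → (ℓ₁)* as a continuous linear map. -/
def pairCLM : ZeroAtInftyContinuousMap ℕ ℝ →L[ℝ] StrongDual ℝ (lp (fun _ : ℕ => ℝ) 1) :=
  LinearMap.mkContinuous
    { toFun := pairFn
      map_add' := by
        intro z z'
        refine ContinuousLinearMap.ext fun w => ?_
        show pairFn (z + z') w = pairFn z w + pairFn z' w
        rw [pairFn_apply, pairFn_apply, pairFn_apply]
        have : ∀ n, w n * (z + z') n = w n * z n + w n * z' n := by
          intro n
          simp [mul_add]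
        rw [tsum_congr this]
        exact Summable.tsum_add (pair_summable z w) (pair_summable z' w)
      map_smul' := by
        intro c z
        refine ContinuousLinearMap.ext fun w => ?_
        show pairFn (c • z) w = c * pairFn z w
        rw [pairFn_apply, pairFn_apply]
        have : ∀ n, w n * (c • z) n = c * (w n * z n) := by
          intro n
          simp; ring
        rw [tsum_congr this, tsum_mul_left] }
    1
    (fun z => by simpa using pairFn_norm_le z)

lemma pairCLM_apply (z : ZeroAtInftyContinuousMap ℕ ℝ) : pairCLM z = pairFn z := rfl

/-- the indicator of {0} as an element of c₀ -/
def zNat : ZeroAtInftyContinuousMap ℕ ℝ :=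
  { toFun := fun n => if n = 0 then 1 else 0
    continuous_toFun := continuous_of_discreteTopology
    zero_at_infty' := by
      rw [cocompact_eq_cofinite]
      have h : (fun n : ℕ => if n = 0 then (1:ℝ) else 0) =ᶠ[cofinite] (fun _ => 0) := by
        rw [Filter.eventuallyEq_iff_exists_mem]
        exact ⟨{n | n ≠ 0}, by simp [Set.Finite.subset (Set.finite_singleton 0)],
          fun n hn => by simp [Set.mem_setOf_eq] at hn; simp [hn]⟩
      exact (tendsto_congr' h).mpr tendsto_const_nhds }

lemma zNat_norm : ‖zNat‖ = 1 := by
  apply le_antisymm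
  · rw [← ZeroAtInftyContinuousMap.norm_toBCF_eq_norm]
    refine (BoundedContinuousFunction.norm_le zero_le_one).mpr fun n => ?_
    by_cases h : n = 0 <;> simp [zNat, h]
  · have := zNat.toBCF.norm_coe_le_norm 0
    rw [ZeroAtInftyContinuousMap.norm_toBCF_eq_norm] at this
    simpa [zNat] using this



lemma adjOp_apply {X Y : Type*} [NormedAddCommGroup X] [NormedSpace ℝ X]
    [NormedAddCommGroup Y] [NormedSpace ℝ Y] (T : X →L[ℝ] Y) (f : StrongDual ℝ Y) (x : X) :
    adjOp T f x = f (T x) := rfl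

lemma adjOp_norm_apply_le {X Y : Type*} [NormedAddCommGroup X] [NormedSpace ℝ X]
    [NormedAddCommGroup Y] [NormedSpace ℝ Y] (T : X →L[ℝ] Y) (f : StrongDual ℝ Y) :
    ‖adjOp T f‖ ≤ ‖f‖ * ‖T‖ := by
  refine ContinuousLinearMap.opNorm_le_bound _ (by positivity) fun x => ?_
  rw [adjOp_apply]
  calc ‖f (T x)‖ ≤ ‖f‖ * ‖T x‖ := f.le_opNorm _
    _ ≤ ‖f‖ * (‖T‖ * ‖x‖) := by
        exact mul_le_mul_of_nonneg_left (T.le_opNorm x) (norm_nonneg f)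
    _ = ‖f‖ * ‖T‖ * ‖x‖ := by ring

theorem stmt10' {X Y : Type*} [NormedAddCommGroup X] [NormedSpace ℝ X] [CompleteSpace X]
    [NormedAddCommGroup Y] [NormedSpace ℝ Y] [CompleteSpace Y] (T : X →L[ℝ] Y) :
    SCSZ (lp (fun _ : ℕ => ℝ) 1) T ≤ SSZ (ZeroAtInftyContinuousMap ℕ ℝ) (adjOp T) := by
  classical
  set B := { r : ℝ | ∃ R : ZeroAtInftyContinuousMap ℕ ℝ →L[ℝ] StrongDual ℝ Y, ∃ c : ℝ, 0 < c ∧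
      (∀ z, c * ‖z‖ ≤ ‖adjOp T (R z)‖) ∧ r = c / ‖R‖ } with hBdef
  have hBdd : BddAbove B := by
    refine ⟨‖adjOp T‖, ?_⟩
    rintro r ⟨R, c, hc, hle, rfl⟩
    have hz := hle zNat
    rw [zNat_norm, mul_one] at hz
    have h1 : ‖adjOp T (R zNat)‖ ≤ ‖adjOp T‖ * ‖R‖ := by
      calc ‖adjOp T (R zNat)‖ ≤ ‖adjOp T‖ * ‖R zNat‖ := (adjOp T).le_opNorm _
        _ ≤ ‖adjOp T‖ * (‖R‖ * ‖zNat‖) :=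
            mul_le_mul_of_nonneg_left (R.le_opNorm _) (norm_nonneg (adjOp T))
        _ = ‖adjOp T‖ * ‖R‖ := by rw [zNat_norm, mul_one]
    have hcle : c ≤ ‖adjOp T‖ * ‖R‖ := hz.trans h1
    have hR : 0 < ‖R‖ := by
      rcases (norm_nonneg R).lt_or_eq with h | h
      · exact h
      · exfalso; nlinarith [norm_nonneg (adjOp T)]
    rw [div_le_iff₀ hR]
    linarith
  have hBnonneg : 0 ≤ sSup B := by
    refine Real.sSup_nonneg ?_
    rintro r ⟨R, c, hc, hle, rfl⟩
    positivity
  have hgoal : SSZ (ZeroAtInftyContinuousMap ℕ ℝ) (adjOp T) = sSup B := rfl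
  rw [hgoal]
  refine Real.sSup_le ?_ hBnonneg
  rintro r ⟨S, hsurj, rfl⟩
  rcases (norm_nonneg S).eq_or_lt with hS | hS
  · rw [← hS, div_zero]; exact hBnonneg
  rw [div_le_iff₀ hS]
  refine Real.sSup_le ?_ (by positivity)
  rintro d ⟨hd, hcov⟩
  set V : ZeroAtInftyContinuousMap ℕ ℝ →L[ℝ] StrongDual ℝ Y :=
    (adjOp S).comp pairCLM with hVdef
  have hVle : ∀ z, d * ‖z‖ ≤ ‖adjOp T (V z)‖ := by
    intro z
    set M := ‖adjOp T (V z)‖ with hM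
    have hM0 : 0 ≤ M := norm_nonneg _
    have key : ∀ n : ℕ, d * ‖z n‖ ≤ M := by
      intro n
      have hwn : ‖(lp.single 1 n d : lp (fun _ : ℕ => ℝ) 1)‖ ≤ d := by
        have h := lp.norm_single (E := fun _ : ℕ => ℝ) (p := 1) (by norm_num)
          n d
        rw [h, Real.norm_of_nonneg hd.le]
      obtain ⟨x, hx1, hx2⟩ := hcov (lp.single 1 n d) hwn
      have hx2' : S (T x) = lp.single 1 n d := hx2
      have hval : adjOp T (V z) x = d * z n := by
        have h1 : adjOp T (V z) x = pairFn z (S (T x)) := rfl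
        rw [h1, hx2', pairFn_apply]
        rw [tsum_eq_single n]
        · rw [lp.single_apply_self]
        · intro m hm
          rw [lp.single_apply_ne (E := fun _ : ℕ => ℝ) 1 n d hm, zero_mul]
      calc d * ‖z n‖ = ‖adjOp T (V z) x‖ := by
            rw [hval, norm_mul, Real.norm_of_nonneg hd.le]
        _ ≤ M * ‖x‖ := (adjOp T (V z)).le_opNorm x
        _ ≤ M * 1 := mul_le_mul_of_nonneg_left hx1 hM0
        _ = M := mul_one M
    rw [mul_comm, ← le_div_iff₀ hd]
    refine c0_norm_le z (div_nonneg hM0 hd.le) fun n => ?_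
    rw [le_div_iff₀ hd, mul_comm]
    exact key n
  have hV0 : 0 < ‖V‖ := by
    rcases (norm_nonneg V).lt_or_eq with h | h
    · exact h
    · exfalso
      have hz := hVle zNat
      rw [zNat_norm, mul_one] at hz
      have : V = 0 := (ContinuousLinearMap.opNorm_zero_iff (f := V)).mp h.symm
      rw [this] at hz
      simp only [ContinuousLinearMap.zero_apply, map_zero, norm_zero] at hz
      linarith
  have hVS : ‖V‖ ≤ ‖S‖ := by
    refine ContinuousLinearMap.opNorm_le_bound _ hS.le fun z => ?_
    have h1 : ‖V z‖ ≤ ‖pairFn z‖ * ‖S‖ := adjOp_norm_apply_le S (pairFn z)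
    calc ‖V z‖ ≤ ‖pairFn z‖ * ‖S‖ := h1
      _ ≤ ‖z‖ * ‖S‖ := mul_le_mul_of_nonneg_right (pairFn_norm_le z) hS.le
      _ = ‖S‖ * ‖z‖ := mul_comm _ _
  have hmem : d / ‖V‖ ∈ B := ⟨V, d, hd, hVle, rfl⟩
  have h1 : d / ‖S‖ ≤ d / ‖V‖ := div_le_div_of_nonneg_left hd.le hV0 hVS
  have h2 : d / ‖V‖ ≤ sSup B := le_csSup hBdd hmem
  have := h1.trans h2
  rw [div_le_iff₀ hS] at this
  linarith

end

theorem stmt10 {X Y : Type*} [NormedAddCommGroup X] [NormedSpace ℝ X] [CompleteSpace X]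
    [NormedAddCommGroup Y] [NormedSpace ℝ Y] [CompleteSpace Y] (T : X →L[ℝ] Y) :
    SCSZ (lp (fun _ : ℕ => ℝ) 1) T ≤ SSZ (ZeroAtInftyContinuousMap ℕ ℝ) (adjOp T) := stmt10' T
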